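/- Let C be the open baker's map with domain S, and define the backward trapped set Γ₊ as the set of points x ∈ [0,1)² admitting a full backward orbit: there exists a sequence (y_t)_{t∈ℕ} with y₀ = x and, for all t ∈ ℕ, y_{t+1} ∈ S and C(y_{t+1}) = y_t. Then Γ₊ = [0,1) × Can₀. -/

import Mathlib

/-- The domain `S = ([0,1/3) ∪ [2/3,1)) × [0,1)` of the open baker's map. -/
def bakerDomain : Set (ℝ × ℝ) :=
  (Set.Ico (0 : ℝ) (1 / 3) ∪ Set.Ico (2 / 3 : ℝ) 1) ×ˢ Set.Ico (0 : ℝ) 1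

/-- The Cantor-like set `Can₀` of points of `[0,1)` all of whose ternary digits
(in the floor convention `digit_n(q) = ⌊3^{n+1}·q⌋ mod 3`) differ from `1`. -/
def Can0 : Set ℝ :=
  {q : ℝ | q ∈ Set.Ico (0 : ℝ) 1 ∧ ∀ n : ℕ, ⌊(3 : ℝ) ^ (n + 1) * q⌋ % 3 ≠ 1}

lemma can0_lt_or_ge {p : ℝ} (hp : p ∈ Can0) : p < 1/3 ∨ 2/3 ≤ p := by
  obtain ⟨⟨h0, h1⟩, hd⟩ := hp
  by_contra h
  push_neg at h
  obtain ⟨hge, hlt⟩ := h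
  have hfl : ⌊(3:ℝ)^(0+1) * p⌋ = 1 := by
    rw [Int.floor_eq_iff]
    constructor <;> push_cast <;> nlinarith
  have := hd 0
  rw [hfl] at this
  exact this rfl

lemma can0_shift0 {p : ℝ} (hp : p ∈ Can0) (h : p < 1/3) : 3*p ∈ Can0 := by
  obtain ⟨⟨h0, h1⟩, hd⟩ := hp
  refine ⟨⟨by linarith, by linarith⟩, fun n => ?_⟩
  have : (3:ℝ)^(n+1) * (3*p) = (3:ℝ)^(n+1+1) * p := by ring
  rw [this]
  exact hd (n+1)

lemma can0_shift2 {p : ℝ} (hp : p ∈ Can0) (h : 2/3 ≤ p) : 3*p - 2 ∈ Can0 := by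
  obtain ⟨⟨h0, h1⟩, hd⟩ := hp
  refine ⟨⟨by linarith, by linarith⟩, fun n => ?_⟩
  have he : (3:ℝ)^(n+1) * (3*p - 2) = (3:ℝ)^(n+1+1) * p - ((2 * 3^(n+1) : ℤ) : ℝ) := by
    push_cast; ring
  rw [he, Int.floor_sub_intCast]
  have hdvd : ((2 * 3^(n+1) : ℤ)) % 3 = 0 := by
    have : (3:ℤ) ∣ 2 * 3^(n+1) := ⟨2 * 3^n, by ring⟩
    omega
  have := hd (n+1)
  omega

/-- backward step of the open baker's map -/
noncomputable def bstep (x : ℝ × ℝ) : ℝ × ℝ :=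
  if x.2 < 1/3 then (x.1/3, 3*x.2) else ((x.1+2)/3, 3*x.2 - 2)

/-- for the open baker's map `C` with domain `S`, the backward trapped set
`Γ₊` — the set of points of `[0,1)²` admitting a full backward orbit — equals
`[0,1) × Can₀`. -/
theorem stmt_13 (C : ℝ × ℝ → ℝ × ℝ)
    (hC0 : ∀ q p : ℝ, q ∈ Set.Ico (0 : ℝ) (1 / 3) → C (q, p) = (3 * q, p / 3))
    (hC2 : ∀ q p : ℝ, q ∈ Set.Ico (2 / 3 : ℝ) 1 → C (q, p) = (3 * q - 2, (p + 2) / 3)) :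
    {x : ℝ × ℝ | x ∈ Set.Ico (0 : ℝ) 1 ×ˢ Set.Ico (0 : ℝ) 1 ∧
        ∃ y : ℕ → ℝ × ℝ, y 0 = x ∧
          ∀ t : ℕ, y (t + 1) ∈ bakerDomain ∧ C (y (t + 1)) = y t} =
      Set.Ico (0 : ℝ) 1 ×ˢ Can0 := by
  -- helper: one application of C on the domain
  have step_rel : ∀ z w : ℝ × ℝ, z ∈ bakerDomain → C z = w →
      ∃ a : ℤ, (a = 0 ∨ a = 2) ∧ 3 * w.2 = a + z.2 := by
    rintro z w ⟨hz1, hz2⟩ hCz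
    rcases hz1 with h | h
    · refine ⟨0, Or.inl rfl, ?_⟩
      have := hC0 z.1 z.2 h
      rw [show (z.1, z.2) = z from rfl, hCz] at this
      have : w.2 = z.2 / 3 := by rw [this]
      rw [this]; push_cast; ring
    · refine ⟨2, Or.inr rfl, ?_⟩
      have := hC2 z.1 z.2 h
      rw [show (z.1, z.2) = z from rfl, hCz] at this
      have : w.2 = (z.2 + 2) / 3 := by rw [this]
      rw [this]; push_cast; ring
  ext x
  simp only [Set.mem_setOf_eq, Set.mem_prod]
  constructor
  · rintro ⟨⟨hx1, hx2⟩, y, hy0, hstep⟩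
    refine ⟨hx1, hx2, fun n => ?_⟩
    have key : ∀ n : ℕ, ∃ N : ℤ, N % 3 ≠ 1 ∧ (3:ℝ)^(n+1) * x.2 = N + (y (n+1)).2 := by
      intro n
      induction n with
      | zero =>
        obtain ⟨hmem, hCy⟩ := hstep 0
        rw [hy0] at hCy
        obtain ⟨a, ha, hrel⟩ := step_rel _ _ hmem hCy
        exact ⟨a, by omega, by rw [pow_one]; push_cast at hrel ⊢; linarith⟩
      | succ n ih =>
        obtain ⟨N, hN, hEq⟩ := ih
        obtain ⟨hmem, hCy⟩ := hstep (n+1)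
        obtain ⟨a, ha, hrel⟩ := step_rel _ _ hmem hCy
        refine ⟨3 * N + a, by omega, ?_⟩
        have : (3:ℝ)^(n+1+1) * x.2 = 3 * ((3:ℝ)^(n+1) * x.2) := by ring
        rw [this, hEq]
        push_cast
        push_cast at hrel
        linarith
    obtain ⟨N, hN, hEq⟩ := key n
    have hz : (y (n+1)).2 ∈ Set.Ico (0:ℝ) 1 := (hstep n).1.2
    have hfl : ⌊(3:ℝ)^(n+1) * x.2⌋ = N := by
      rw [hEq, Int.floor_intCast_add, Int.floor_eq_zero_iff.mpr (by exact hz), add_zero]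
    rw [hfl]; exact hN
  · rintro ⟨hx1, hx2⟩
    -- the backward step preserves [0,1) × Can0
    have hstep_inv : ∀ z : ℝ × ℝ, z.1 ∈ Set.Ico (0:ℝ) 1 → z.2 ∈ Can0 →
        ((bstep z).1 ∈ Set.Ico (0:ℝ) 1 ∧ (bstep z).2 ∈ Can0) ∧
          bstep z ∈ bakerDomain ∧ C (bstep z) = z := by
      rintro z ⟨hq0, hq1⟩ hp
      obtain ⟨hp0, hp1⟩ := hp.1
      rcases can0_lt_or_ge hp with h | h
      · have hb : bstep z = (z.1/3, 3*z.2) := by rw [bstep, if_pos h]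
        have hmem : z.1/3 ∈ Set.Ico (0:ℝ) (1/3) := ⟨by linarith, by linarith⟩
        rw [hb]
        refine ⟨⟨⟨by linarith, by linarith⟩, can0_shift0 hp h⟩,
          ⟨Or.inl hmem, ⟨by linarith, by linarith⟩⟩, ?_⟩
        rw [hC0 _ _ hmem]
        ext <;> simp <;> ring
      · have hnot : ¬ z.2 < 1/3 := by linarith
        have hb : bstep z = ((z.1+2)/3, 3*z.2 - 2) := by rw [bstep, if_neg hnot]
        have hmem : (z.1+2)/3 ∈ Set.Ico (2/3:ℝ) 1 := ⟨by linarith, by linarith⟩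
        rw [hb]
        refine ⟨⟨⟨by linarith, by linarith⟩, can0_shift2 hp h⟩,
          ⟨Or.inr hmem, ⟨by linarith, by linarith⟩⟩, ?_⟩
        rw [hC2 _ _ hmem]
        ext <;> simp <;> ring
    have hx2' : x.2 ∈ Set.Ico (0:ℝ) 1 := hx2.1
    refine ⟨⟨hx1, hx2'⟩, fun t => bstep^[t] x, Function.iterate_zero_apply _ _, ?_⟩
    have hinv : ∀ t : ℕ, (bstep^[t] x).1 ∈ Set.Ico (0:ℝ) 1 ∧ (bstep^[t] x).2 ∈ Can0 := by
      intro t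
      induction t with
      | zero => exact ⟨hx1, hx2⟩
      | succ t ih =>
        rw [Function.iterate_succ_apply']
        exact (hstep_inv _ ih.1 ih.2).1
    intro t
    have h := hstep_inv (bstep^[t] x) (hinv t).1 (hinv t).2
    simp only [Function.iterate_succ_apply']
    exact ⟨h.2.1, h.2.2⟩
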